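/- Let k ≥ 3 and m : ℝ with m ≠ 1 and m ≠ 2. If ω : Fin k → ℝ is a weight vector such that T_m(P_{n,ω}) = 0 for all n ≥ 1, then ω = 0. (The kernel of T_m acting on the WIP-module is zero when m ∉ {1,2}.) -/

import Mathlib

open MvPolynomial Finset

/-- The weight coefficient `A_ω(α)` of Theorem 2.1 (for `α ≠ 0`):
`A_ω(α) = multinomial(α) · (Σ α_i ω_i) / (Σ α_i)`. -/
noncomputable def Aw {k : ℕ} (ω : Fin k → ℝ) (α : Fin k → ℕ) : ℝ :=
  (Nat.multinomial Finset.univ α : ℝ) * (∑ i, (α i : ℝ) * ω i) / (∑ i, (α i : ℝ))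

/-- The isobaric degree `Σ_{i=1}^k i·α_i` of an exponent vector. -/
def isoDeg {k : ℕ} (α : Fin k → ℕ) : ℕ := ∑ i, (i.1 + 1) * α i

/-- The (finite) set of exponent vectors of isobaric degree `n`. -/
def wipIndex (k n : ℕ) : Finset (Fin k → ℕ) :=
  (Fintype.piFinset fun _ : Fin k => Finset.range (n + 1)).filter fun α => isoDeg α = n

/-- The weighted isobaric polynomial `P_{n,ω} = Σ_α A_ω(α)·t^α`. -/
noncomputable def WIP (k n : ℕ) (ω : Fin k → ℝ) : MvPolynomial (Fin k) ℝ :=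
  ∑ α ∈ wipIndex k n, MvPolynomial.monomial (Finsupp.equivFunOnFinite.symm α) (Aw ω α)

/-- The operator `T_m(P) = D₁₁P − Σ_j t_j D_{2j}P − m·D₂P`. -/
noncomputable def Tm (k : ℕ) (hk : 2 ≤ k) (m : ℝ) (P : MvPolynomial (Fin k) ℝ) :
    MvPolynomial (Fin k) ℝ :=
  pderiv (⟨0, by omega⟩ : Fin k) (pderiv (⟨0, by omega⟩ : Fin k) P)
    - ∑ j : Fin k, X j * pderiv (⟨1, by omega⟩ : Fin k) (pderiv j P)
    - C m * pderiv (⟨1, by omega⟩ : Fin k) P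

/-- The `j`-th element `γ^{(j)}` of the string generated by `γ`. -/
def strElem (k : ℕ) (hk : 2 ≤ k) (γ : Fin k → ℕ) (j : ℕ) : Fin k → ℕ :=
  fun i => if i = (⟨0, by omega⟩ : Fin k) then γ i + 2 * j
    else if i = (⟨1, by omega⟩ : Fin k) then γ i - j else γ i

/-- The `ω`-weighted string generated by `γ`:
`S_ω(γ) = Σ_{j=0}^{γ₂} A_ω(γ^{(j)})·t^{γ^{(j)}}`. -/
noncomputable def strPoly (k : ℕ) (hk : 2 ≤ k) (ω : Fin k → ℝ) (γ : Fin k → ℕ) :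
    MvPolynomial (Fin k) ℝ :=
  ∑ j ∈ Finset.range (γ (⟨1, by omega⟩ : Fin k) + 1),
    MvPolynomial.monomial (Finsupp.equivFunOnFinite.symm (strElem k hk γ j))
      (Aw ω (strElem k hk γ j))

lemma multinomial_subset {α : Type*} [DecidableEq α] (s t : Finset α) (f : α → ℕ)
    (h : s ⊆ t) (hf : ∀ i ∈ t, i ∉ s → f i = 0) :
    Nat.multinomial t f = Nat.multinomial s f := by
  unfold Nat.multinomial
  rw [← Finset.sum_subset h (fun i hi his => hf i hi his),
    ← Finset.prod_subset h (fun i hi his => by rw [hf i hi his]; rfl)]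

lemma coeff_WIP {k n : ℕ} (ω : Fin k → ℝ) (d : Fin k →₀ ℕ) (hd : ∀ i, d i ≤ n) :
    coeff d (WIP k n ω) = if isoDeg ⇑d = n then Aw ω ⇑d else 0 := by
  unfold WIP
  rw [MvPolynomial.coeff_sum]
  have key : ∀ α ∈ wipIndex k n,
      coeff d (monomial (Finsupp.equivFunOnFinite.symm α) (Aw ω α))
      = if α = ⇑d then Aw ω α else 0 := by
    intro α _
    rw [coeff_monomial]
    have hiff : (Finsupp.equivFunOnFinite.symm α = d) ↔ α = ⇑d := by
      rw [Equiv.symm_apply_eq]; exact Iff.rfl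
    simp only [hiff]
  rw [Finset.sum_congr rfl key, Finset.sum_ite_eq' (wipIndex k n) (⇑d) (fun α => Aw ω α)]
  by_cases hmem : ⇑d ∈ wipIndex k n
  · have : isoDeg ⇑d = n := (Finset.mem_filter.mp hmem).2
    simp [hmem, this]
  · have : isoDeg ⇑d ≠ n := by
      intro hiso
      apply hmem
      rw [wipIndex, Finset.mem_filter]
      refine ⟨Fintype.mem_piFinset.mpr fun i => Finset.mem_range.mpr ?_, hiso⟩
      exact Nat.lt_succ_of_le (hd i)
    simp [hmem, this]

lemma coeff_pderiv {k : ℕ} (i : Fin k) (d : Fin k →₀ ℕ) (P : MvPolynomial (Fin k) ℝ) :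
    coeff d (pderiv i P) = (d i + 1 : ℕ) * coeff (d + Finsupp.single i 1) P := by
  induction P using MvPolynomial.induction_on' with
  | monomial s a =>
    rw [pderiv_monomial, coeff_monomial, coeff_monomial]
    rcases Nat.eq_zero_or_pos (s i) with h0 | hpos
    · have hsub : s - Finsupp.single i 1 = s := by
        ext j; rcases eq_or_ne j i with rfl | hj
        · simp [h0, Finsupp.single_apply]
        · simp [Finsupp.single_apply, Ne.symm hj]
      rw [hsub, h0]
      have : s ≠ d + Finsupp.single i 1 := by
        intro he; apply absurd (congrArg (fun f => f i) he); simp [h0]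
      simp [this]
    · have hs : s = (s - Finsupp.single i 1) + Finsupp.single i 1 := by
        ext j; rcases eq_or_ne j i with rfl | hj
        · simp [Finsupp.single_apply]; omega
        · simp [Finsupp.single_apply, Ne.symm hj]
      by_cases he : s - Finsupp.single i 1 = d
      · have : s = d + Finsupp.single i 1 := by rw [hs, he]
        have hdi : s i = d i + 1 := by rw [this]; simp
        simp [he, this, hdi]; ring
      · have : s ≠ d + Finsupp.single i 1 := by
          intro hc; apply he
          have := congrArg (fun f => f - Finsupp.single i 1) hc
          simpa using this
        simp [he, this]
  | add p q hp hq => simp [hp, hq, mul_add]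


lemma coeff_zero_Tm {k : ℕ} (hk : 2 ≤ k) (m : ℝ) (P : MvPolynomial (Fin k) ℝ) :
    coeff 0 (Tm k hk m P)
    = 2 * coeff (Finsupp.single (⟨0, by omega⟩ : Fin k) 1 + Finsupp.single (⟨0, by omega⟩ : Fin k) 1) P
      - m * coeff (Finsupp.single (⟨1, by omega⟩ : Fin k) 1) P := by
  set i0 : Fin k := ⟨0, by omega⟩
  set i1 : Fin k := ⟨1, by omega⟩
  unfold Tm
  rw [coeff_sub, coeff_sub, coeff_C_mul, MvPolynomial.coeff_sum]
  have h2 : ∀ j : Fin k, coeff 0 (X j * pderiv i1 (pderiv j P)) = 0 := by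
    intro j
    rw [coeff_X_mul']
    simp
  rw [Finset.sum_congr rfl (fun j _ => h2 j), Finset.sum_const_zero]
  rw [coeff_pderiv, coeff_pderiv, coeff_pderiv]
  simp [Finsupp.single_apply]
  rfl

lemma coeff_single_Tm {k : ℕ} (hk : 2 ≤ k) (m : ℝ) (P : MvPolynomial (Fin k) ℝ) (i : Fin k) :
    coeff (Finsupp.single i 1) (Tm k hk m P)
    = ((Finsupp.single i 1 : Fin k →₀ ℕ) (⟨0, by omega⟩ : Fin k) + 1 : ℕ)
        * (((Finsupp.single i 1 + Finsupp.single (⟨0, by omega⟩ : Fin k) 1 : Fin k →₀ ℕ)) (⟨0, by omega⟩ : Fin k) + 1 : ℕ)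
        * coeff (Finsupp.single i 1 + Finsupp.single (⟨0, by omega⟩ : Fin k) 1 + Finsupp.single (⟨0, by omega⟩ : Fin k) 1) P
      - ((Finsupp.single (⟨1, by omega⟩ : Fin k) 1 : Fin k →₀ ℕ) i + 1 : ℕ)
        * coeff (Finsupp.single (⟨1, by omega⟩ : Fin k) 1 + Finsupp.single i 1) P
      - m * ((Finsupp.single i 1 : Fin k →₀ ℕ) (⟨1, by omega⟩ : Fin k) + 1 : ℕ)
        * coeff (Finsupp.single i 1 + Finsupp.single (⟨1, by omega⟩ : Fin k) 1) P := by
  set i0 : Fin k := ⟨0, by omega⟩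
  set i1 : Fin k := ⟨1, by omega⟩
  unfold Tm
  rw [coeff_sub, coeff_sub, coeff_C_mul, MvPolynomial.coeff_sum]
  have h2 : ∀ j : Fin k, coeff (Finsupp.single i 1) (X j * pderiv i1 (pderiv j P))
      = if j = i then coeff 0 (pderiv i1 (pderiv i P)) else 0 := by
    intro j
    rw [coeff_X_mul']
    rcases eq_or_ne j i with rfl | hj
    · simp
    · simp [Finsupp.support_single_ne_zero, hj]
  rw [Finset.sum_congr rfl (fun j _ => h2 j),
    Finset.sum_ite_eq' Finset.univ i (fun _ => coeff 0 (pderiv i1 (pderiv i P))),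
    if_pos (Finset.mem_univ i)]
  rw [coeff_pderiv, coeff_pderiv, coeff_pderiv, coeff_pderiv, coeff_pderiv]
  push_cast
  simp only [Finsupp.coe_zero, Pi.zero_apply, zero_add, Nat.cast_one, one_mul]
  ring

lemma sum_single_cast {k : ℕ} (a : Fin k) (p : ℕ) (ω : Fin k → ℝ) :
    ∑ i, (((Finsupp.single a p : Fin k →₀ ℕ) i : ℝ)) * ω i = p * ω a := by
  rw [Finset.sum_eq_single a]
  · simp
  · intro b _ hb; simp [Finsupp.single_apply, Ne.symm hb]
  · intro hb; exact absurd (Finset.mem_univ a) hb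

lemma sum_single_cast' {k : ℕ} (a : Fin k) (p : ℕ) :
    ∑ i, (((Finsupp.single a p : Fin k →₀ ℕ) i : ℝ)) = p := by
  have := sum_single_cast a p (fun _ => (1:ℝ))
  simpa using this

lemma mult_single {k : ℕ} (a : Fin k) (p : ℕ) :
    Nat.multinomial Finset.univ ⇑(Finsupp.single a p : Fin k →₀ ℕ) = 1 := by
  rw [multinomial_subset {a} Finset.univ _ (Finset.subset_univ _)
    (fun i _ hi => by simp [Finsupp.single_apply, Ne.symm (Finset.notMem_singleton.mp hi)])]
  simp

lemma mult_pair {k : ℕ} (a b : Fin k) (hab : a ≠ b) (p q : ℕ) :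
    Nat.multinomial Finset.univ ⇑(Finsupp.single a p + Finsupp.single b q : Fin k →₀ ℕ)
    = (p + q).choose p := by
  rw [multinomial_subset {a, b} Finset.univ _ (Finset.subset_univ _)
    (fun i _ hi => by
      simp only [Finset.mem_insert, Finset.mem_singleton, not_or] at hi
      simp [Finsupp.single_apply, Ne.symm hi.1, Ne.symm hi.2])]
  rw [Nat.binomial_eq_choose hab]
  simp [Finsupp.single_apply, hab, Ne.symm hab]

lemma Aw_single {k : ℕ} (ω : Fin k → ℝ) (a : Fin k) (p : ℕ) (hp : p ≠ 0) :
    Aw ω ⇑(Finsupp.single a p : Fin k →₀ ℕ) = ω a := by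
  unfold Aw
  rw [mult_single, sum_single_cast, sum_single_cast']
  have : (p : ℝ) ≠ 0 := Nat.cast_ne_zero.mpr hp
  field_simp
  simp

lemma Aw_pair {k : ℕ} (ω : Fin k → ℝ) (a b : Fin k) (hab : a ≠ b) (p q : ℕ) :
    Aw ω ⇑(Finsupp.single a p + Finsupp.single b q : Fin k →₀ ℕ)
    = ((p + q).choose p : ℝ) * (p * ω a + q * ω b) / (p + q) := by
  unfold Aw
  rw [mult_pair a b hab]
  congr 1
  · congr 1
    rw [← sum_single_cast a p ω, ← sum_single_cast b q ω, ← Finset.sum_add_distrib]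
    apply Finset.sum_congr rfl
    intro i _
    push_cast [Finsupp.add_apply]
    ring
  · rw [← sum_single_cast' a p, ← sum_single_cast' b q, ← Finset.sum_add_distrib]
    apply Finset.sum_congr rfl
    intro i _
    push_cast [Finsupp.add_apply]
    ring

lemma isoDeg_single {k : ℕ} (a : Fin k) (p : ℕ) :
    isoDeg ⇑(Finsupp.single a p : Fin k →₀ ℕ) = (a.1 + 1) * p := by
  unfold isoDeg
  rw [Finset.sum_eq_single a]
  · simp
  · intro b _ hb; simp [Finsupp.single_apply, Ne.symm hb]
  · intro hb; exact absurd (Finset.mem_univ a) hb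

lemma isoDeg_pair {k : ℕ} (a b : Fin k) (p q : ℕ) :
    isoDeg ⇑(Finsupp.single a p + Finsupp.single b q : Fin k →₀ ℕ)
    = (a.1 + 1) * p + (b.1 + 1) * q := by
  unfold isoDeg
  rw [← isoDeg_single a p, ← isoDeg_single b q]
  unfold isoDeg
  rw [← Finset.sum_add_distrib]
  apply Finset.sum_congr rfl
  intro i _
  simp [Finsupp.add_apply, Nat.mul_add]


/-- The kernel of `T_m` on the WIP-module is zero when `m ∉ {1, 2}`. -/
theorem ker_Tm_trivial (k : ℕ) (hk : 3 ≤ k) (m : ℝ) (hm1 : m ≠ 1) (hm2 : m ≠ 2)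
    (ω : Fin k → ℝ) (h : ∀ n, 1 ≤ n → Tm k (by omega) m (WIP k n ω) = 0) :
    ω = 0 := by
  have hk2 : 2 ≤ k := by omega
  have h01 : (⟨0, by omega⟩ : Fin k) ≠ (⟨1, by omega⟩ : Fin k) := Fin.ne_of_val_ne (by norm_num)
  have bnd1 : ∀ (a : Fin k) (p n : ℕ), p ≤ n →
      ∀ j, (Finsupp.single a p : Fin k →₀ ℕ) j ≤ n := by
    intro a p n hpn j
    rw [Finsupp.single_apply]; split <;> omega
  have bnd2 : ∀ (a b : Fin k) (p q n : ℕ), p + q ≤ n →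
      ∀ j, (Finsupp.single a p + Finsupp.single b q : Fin k →₀ ℕ) j ≤ n := by
    intro a b p q n hpn j
    rw [Finsupp.add_apply, Finsupp.single_apply, Finsupp.single_apply]
    split <;> split <;> omega
  have cW1 : ∀ (a : Fin k) (p n : ℕ), p ≠ 0 → p ≤ n → (a.1 + 1) * p = n →
      coeff (Finsupp.single a p) (WIP k n ω) = ω a := by
    intro a p n hp hpn hiso
    rw [coeff_WIP ω _ (bnd1 a p n hpn), if_pos (by rw [isoDeg_single]; exact hiso),
      Aw_single ω a p hp]
  have cW2 : ∀ (a b : Fin k) (p q n : ℕ), a ≠ b → p + q ≤ n →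
      (a.1 + 1) * p + (b.1 + 1) * q = n →
      coeff (Finsupp.single a p + Finsupp.single b q) (WIP k n ω)
      = ((p + q).choose p : ℝ) * (p * ω a + q * ω b) / (p + q) := by
    intro a b p q n hab hpn hiso
    rw [coeff_WIP ω _ (bnd2 a b p q n hpn), if_pos (by rw [isoDeg_pair]; exact hiso),
      Aw_pair ω a b hab p q]
  -- Equation A (n = 2, constant coefficient)
  have hA : 2 * ω (⟨0, by omega⟩ : Fin k) - m * ω (⟨1, by omega⟩ : Fin k) = 0 := by
    have hA0 := congrArg (coeff (0 : Fin k →₀ ℕ)) (h 2 (by omega))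
    rw [coeff_zero_Tm hk2, coeff_zero] at hA0
    rw [show (Finsupp.single (⟨0, by omega⟩ : Fin k) 1 + Finsupp.single (⟨0, by omega⟩ : Fin k) 1
          : Fin k →₀ ℕ) = Finsupp.single (⟨0, by omega⟩ : Fin k) 2 by
        rw [← Finsupp.single_add]] at hA0
    rw [cW1 ⟨0, by omega⟩ 2 2 (by norm_num) (by norm_num) (by norm_num),
      cW1 ⟨1, by omega⟩ 1 2 (by norm_num) (by norm_num) (by norm_num)] at hA0
    exact hA0
  -- Equation B (n = 3, coefficient of t1)
  have hB : 6 * ω (⟨0, by omega⟩ : Fin k) - (1 + m) * (ω (⟨0, by omega⟩ : Fin k) + ω (⟨1, by omega⟩ : Fin k)) = 0 := by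
    have hB0 := congrArg (coeff (Finsupp.single (⟨0, by omega⟩ : Fin k) 1)) (h 3 (by omega))
    rw [coeff_single_Tm hk2, coeff_zero] at hB0
    rw [show (Finsupp.single (⟨0, by omega⟩ : Fin k) 1 + Finsupp.single (⟨0, by omega⟩ : Fin k) 1
          + Finsupp.single (⟨0, by omega⟩ : Fin k) 1 : Fin k →₀ ℕ)
        = Finsupp.single (⟨0, by omega⟩ : Fin k) 3 by
        rw [← Finsupp.single_add, ← Finsupp.single_add]] at hB0
    rw [cW1 ⟨0, by omega⟩ 3 3 (by norm_num) (by norm_num) (by norm_num),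
      cW2 ⟨1, by omega⟩ ⟨0, by omega⟩ 1 1 3 h01.symm (by norm_num) (by norm_num),
      cW2 ⟨0, by omega⟩ ⟨1, by omega⟩ 1 1 3 h01 (by norm_num) (by norm_num)] at hB0
    simp only [Finsupp.single_apply, Finsupp.add_apply, Fin.mk.injEq] at hB0
    norm_num at hB0
    linarith [hB0]
  have h12ne : (m - 1) * (m - 2) ≠ 0 :=
    mul_ne_zero (sub_ne_zero.mpr hm1) (sub_ne_zero.mpr hm2)
  have hω0 : ω (⟨0, by omega⟩ : Fin k) = 0 := by
    have key : (m - 1) * (m - 2) * ω (⟨0, by omega⟩ : Fin k) = 0 := by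
      linear_combination (1 + m) * hA - m * hB
    rcases mul_eq_zero.mp key with hc | hc
    · exact absurd hc h12ne
    · exact hc
  have hω1 : ω (⟨1, by omega⟩ : Fin k) = 0 := by linear_combination hA - hB + (3 - m) * hω0
  funext i
  show ω i = 0
  by_cases hi0 : i = (⟨0, by omega⟩ : Fin k)
  · rw [hi0]; exact hω0
  by_cases hi1 : i = (⟨1, by omega⟩ : Fin k)
  · rw [hi1]; exact hω1
  -- general case: i.1 ≥ 2
  have hiv : 2 ≤ i.1 := by
    rcases Nat.lt_or_ge i.1 2 with hlt | hge
    · exfalso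
      have h0 : i.1 = 0 ∨ i.1 = 1 := by omega
      rcases h0 with h0 | h0
      · exact hi0 (Fin.ext (by simpa using h0))
      · exact hi1 (Fin.ext (by simpa using h0))
    · exact hge
  have hC0 := congrArg (coeff (Finsupp.single i 1)) (h (i.1 + 3) (by omega))
  rw [coeff_single_Tm hk2, coeff_zero] at hC0
  rw [show (Finsupp.single i 1 + Finsupp.single (⟨0, by omega⟩ : Fin k) 1
        + Finsupp.single (⟨0, by omega⟩ : Fin k) 1 : Fin k →₀ ℕ)
      = Finsupp.single i 1 + Finsupp.single (⟨0, by omega⟩ : Fin k) 2 by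
    rw [add_assoc, ← Finsupp.single_add]] at hC0
  rw [cW2 i ⟨0, by omega⟩ 1 2 (i.1 + 3) hi0 (by omega) (by norm_num),
    cW2 ⟨1, by omega⟩ i 1 1 (i.1 + 3) (Ne.symm hi1) (by omega) (by simp <;> omega),
    cW2 i ⟨1, by omega⟩ 1 1 (i.1 + 3) hi1 (by omega) (by simp <;> omega)] at hC0
  simp only [Finsupp.single_apply, Finsupp.add_apply, hi0, hi1, Ne.symm hi0, Ne.symm hi1,
    ite_false, ite_true, if_true, if_false] at hC0
  norm_num at hC0
  have hfin : (1 - m) * ω i = 0 := by linear_combination hC0 - 4 * hω0 + (1 + m) * hω1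
  rcases mul_eq_zero.mp hfin with hc | hc
  · exact absurd (by linarith [hc] : m = 1) hm1
  · exact hc
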